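/- Let P₁ = Gamma(k, λ) and let P₂ be its exponential tilt with density p₂(x) = p₁(x) e^{λ₁ x}/M₁(λ₁), where λ₁ = 1/λ − k/μ₂ < 1/λ and M₁(t) = (1−λt)^{−k} is the moment generating function, so that P₂ = Gamma(k, μ₂/k) has mean μ₂. Then d_W(P₁, P₂) = |μ₂ − λk|. -/

import Mathlib

open MeasureTheory Set
open scoped ENNReal NNReal

namespace WTG

noncomputable def gpdf (k θ : ℝ) : ℝ → ℝ := fun x =>
  if 0 < x then (Real.Gamma k)⁻¹ * (θ ^ k)⁻¹ * x ^ (k - 1) * Real.exp (-x / θ) else 0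

lemma gpdf_nonneg (k θ : ℝ) (hk : 0 < k) (hθ : 0 < θ) (x : ℝ) : 0 ≤ gpdf k θ x := by
  unfold gpdf
  split
  · next hx =>
    have hΓ := Real.Gamma_pos_of_pos hk
    positivity
  · exact le_refl _

lemma gpdf_measurable (k θ : ℝ) : Measurable (gpdf k θ) := by
  unfold gpdf
  refine Measurable.ite measurableSet_Ioi ?_ measurable_const
  fun_prop

lemma gpdf_zero_of_nonpos (k θ : ℝ) {x : ℝ} (hx : ¬ 0 < x) : gpdf k θ x = 0 := by
  simp [gpdf, hx]

lemma integrableOn_core (k θ : ℝ) (hk : 0 < k) (hθ : 0 < θ) :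
    IntegrableOn (fun x : ℝ => x ^ (k - 1) * Real.exp (-x / θ)) (Ioi 0) := by
  have h := integrableOn_rpow_mul_exp_neg_mul_rpow (p := 1) (s := k - 1) (b := θ⁻¹)
    (by linarith) (by norm_num) (by positivity)
  refine h.congr_fun (fun x hx => ?_) measurableSet_Ioi
  beta_reduce
  rw [Real.rpow_one]
  congr 1
  ring

lemma integral_core (k θ : ℝ) (hk : 0 < k) (hθ : 0 < θ) :
    ∫ x in Ioi (0:ℝ), x ^ (k - 1) * Real.exp (-x / θ) = θ ^ k * Real.Gamma k := by
  have h := Real.integral_rpow_mul_exp_neg_mul_Ioi hk (show 0 < θ⁻¹ by positivity)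
  rw [one_div, inv_inv] at h
  rw [← h]
  refine setIntegral_congr_fun measurableSet_Ioi fun x hx => ?_
  congr 1
  ring

lemma gpdf_eq_indicator (k θ : ℝ) : gpdf k θ =
    (Ioi (0:ℝ)).indicator
      (fun x => (Real.Gamma k)⁻¹ * (θ ^ k)⁻¹ * x ^ (k - 1) * Real.exp (-x / θ)) := by
  funext x
  simp [gpdf, Set.indicator, mem_Ioi]

lemma gpdf_integrable (k θ : ℝ) (hk : 0 < k) (hθ : 0 < θ) : Integrable (gpdf k θ) := by
  rw [gpdf_eq_indicator]
  rw [integrable_indicator_iff measurableSet_Ioi]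
  have h := (integrableOn_core k θ hk hθ).const_mul ((Real.Gamma k)⁻¹ * (θ ^ k)⁻¹)
  exact MeasureTheory.IntegrableOn.congr_fun h (fun x hx => by ring) measurableSet_Ioi

lemma gpdf_integral (k θ : ℝ) (hk : 0 < k) (hθ : 0 < θ) : ∫ x, gpdf k θ x = 1 := by
  rw [gpdf_eq_indicator, integral_indicator measurableSet_Ioi]
  have h : ∀ x ∈ Ioi (0:ℝ),
      (Real.Gamma k)⁻¹ * (θ ^ k)⁻¹ * x ^ (k - 1) * Real.exp (-x / θ)
        = ((Real.Gamma k)⁻¹ * (θ ^ k)⁻¹) * (x ^ (k - 1) * Real.exp (-x / θ)) :=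
    fun x _ => by ring
  rw [setIntegral_congr_fun measurableSet_Ioi h, integral_const_mul, integral_core k θ hk hθ]
  have h1 : Real.Gamma k ≠ 0 := (Real.Gamma_pos_of_pos hk).ne'
  have h2 : θ ^ k ≠ 0 := (Real.rpow_pos_of_pos hθ k).ne'
  field_simp

lemma mul_gpdf_eq_indicator (k θ : ℝ) (hk : 0 < k) :
    (fun x => x * gpdf k θ x) =
    (Ioi (0:ℝ)).indicator
      (fun x => ((Real.Gamma k)⁻¹ * (θ ^ k)⁻¹) * (x ^ ((k + 1) - 1) * Real.exp (-x / θ))) := by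
  funext x
  by_cases hx : 0 < x
  · simp only [gpdf, if_pos hx, Set.indicator_of_mem (mem_Ioi.mpr hx)]
    have hxx : x * x ^ (k - 1) = x ^ ((k + 1) - 1) := by
      rw [show (k + 1) - 1 = 1 + (k - 1) by ring, Real.rpow_add hx, Real.rpow_one]
    rw [← hxx]
    ring
  · simp [gpdf_zero_of_nonpos k θ hx, Set.indicator_of_notMem (fun hm => hx (mem_Ioi.mp hm))]

lemma gpdf_moment_integrable (k θ : ℝ) (hk : 0 < k) (hθ : 0 < θ) :
    Integrable (fun x => x * gpdf k θ x) := by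
  rw [mul_gpdf_eq_indicator k θ hk]
  rw [integrable_indicator_iff measurableSet_Ioi]
  exact (integrableOn_core (k + 1) θ (by linarith) hθ).const_mul _

lemma gpdf_moment (k θ : ℝ) (hk : 0 < k) (hθ : 0 < θ) :
    ∫ x, x * gpdf k θ x = θ * k := by
  rw [mul_gpdf_eq_indicator k θ hk, integral_indicator measurableSet_Ioi,
    integral_const_mul, integral_core (k + 1) θ (by linarith) hθ]
  rw [Real.Gamma_add_one hk.ne', Real.rpow_add hθ, Real.rpow_one]
  have h1 : Real.Gamma k ≠ 0 := (Real.Gamma_pos_of_pos hk).ne'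
  have h2 : θ ^ k ≠ 0 := (Real.rpow_pos_of_pos hθ k).ne'
  field_simp

lemma abs_mul_gpdf (k θ : ℝ) (x : ℝ) : |x| * gpdf k θ x = x * gpdf k θ x := by
  by_cases hx : 0 < x
  · rw [abs_of_pos hx]
  · rw [gpdf_zero_of_nonpos k θ hx, mul_zero, mul_zero]

lemma integrable_mul_gpdf (k θ A B : ℝ) (hk : 0 < k) (hθ : 0 < θ) (h : ℝ → ℝ)
    (hh : Continuous h) (hbound : ∀ x, |h x| ≤ A + B * |x|) :
    Integrable (fun x => h x * gpdf k θ x) := by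
  have hdom : Integrable (fun x => A * gpdf k θ x + B * (x * gpdf k θ x)) :=
    ((gpdf_integrable k θ hk hθ).const_mul A).add
      ((gpdf_moment_integrable k θ hk hθ).const_mul B)
  refine hdom.mono' (hh.aestronglyMeasurable.mul
    (gpdf_measurable k θ).aestronglyMeasurable) (ae_of_all _ fun x => ?_)
  have h0 := gpdf_nonneg k θ hk hθ x
  rw [norm_mul, Real.norm_eq_abs, Real.norm_eq_abs, abs_of_nonneg h0]
  calc |h x| * gpdf k θ x ≤ (A + B * |x|) * gpdf k θ x :=
        mul_le_mul_of_nonneg_right (hbound x) h0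
    _ = A * gpdf k θ x + B * (|x| * gpdf k θ x) := by ring
    _ = A * gpdf k θ x + B * (x * gpdf k θ x) := by rw [abs_mul_gpdf]

lemma integral_withDensity_ofReal (p : ℝ → ℝ) (hp : Measurable p) (hp0 : ∀ x, 0 ≤ p x)
    (h : ℝ → ℝ) :
    ∫ x, h x ∂(volume.withDensity fun x => ENNReal.ofReal (p x)) = ∫ x, h x * p x := by
  have e : (fun x => ENNReal.ofReal (p x)) = fun x => (((p x).toNNReal : ℝ≥0) : ℝ≥0∞) := rfl
  rw [e, integral_withDensity_eq_integral_smul hp.real_toNNReal h]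
  congr 1
  funext x
  rw [NNReal.smul_def, smul_eq_mul, Real.coe_toNNReal _ (hp0 x), mul_comm]

end WTG

/-- The Wasserstein distance between `Gamma(k,λ)` and its exponential tilt with
mean `μ₂` (so that `P₂ = Gamma(k, μ₂/k)`) equals `|μ₂ − λk|`. -/
theorem wasserstein_tilted_gamma
    (k lam μ₂ : ℝ) (hk : 0 < k) (hlam : 0 < lam) (hμ₂ : 0 < μ₂)
    (p₁ : ℝ → ℝ)
    (hp₁ : p₁ = fun x => if 0 < x then
        (Real.Gamma k)⁻¹ * (lam ^ k)⁻¹ * x ^ (k - 1) * Real.exp (-x / lam) else 0)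
    (lam₁ : ℝ) (hlam₁ : lam₁ = 1 / lam - k / μ₂)
    (M₁ : ℝ) (hM₁ : M₁ = (1 - lam * lam₁) ^ (-k))
    (p₂ : ℝ → ℝ) (hp₂ : p₂ = fun x => p₁ x * Real.exp (lam₁ * x) / M₁)
    (P₁ P₂ : Measure ℝ)
    (hP₁ : P₁ = volume.withDensity (fun x => ENNReal.ofReal (p₁ x)))
    (hP₂ : P₂ = volume.withDensity (fun x => ENNReal.ofReal (p₂ x)))
    (W : ℝ)
    (hW : IsLUB {d : ℝ | ∃ h : ℝ → ℝ, LipschitzWith 1 h ∧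
        d = |(∫ x, h x ∂P₂) - ∫ x, h x ∂P₁|} W) :
    W = |μ₂ - lam * k| := by
  have hΓ : 0 < Real.Gamma k := Real.Gamma_pos_of_pos hk
  set c : ℝ := μ₂ / (lam * k) with hc
  have hcpos : 0 < c := by positivity
  have hclam : 0 < c * lam := by positivity
  have hp₁' : p₁ = WTG.gpdf k lam := by rw [hp₁]; rfl
  -- identify p₂ with the Gamma(k, c*lam) density
  have hM : M₁ = c ^ k := by
    have e1 : 1 - lam * lam₁ = c⁻¹ := by
      rw [hlam₁, hc]
      field_simp
      ring
    rw [hM₁, e1, Real.inv_rpow hcpos.le, Real.rpow_neg hcpos.le, inv_inv]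
  have hp₂' : p₂ = WTG.gpdf k (c * lam) := by
    funext x
    rw [hp₂, hp₁]
    by_cases hx : 0 < x
    · simp only [if_pos hx, WTG.gpdf, if_pos hx]
      rw [hM]
      have h1 : ((c * lam) ^ k)⁻¹ = (c ^ k)⁻¹ * (lam ^ k)⁻¹ := by
        rw [Real.mul_rpow hcpos.le hlam.le, mul_inv]
      have h2 : Real.exp (-x / lam) * Real.exp (lam₁ * x) = Real.exp (-x / (c * lam)) := by
        rw [← Real.exp_add]
        congr 1
        rw [hlam₁, hc]
        field_simp
        ring
      have hck : c ^ k ≠ 0 := (Real.rpow_pos_of_pos hcpos k).ne'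
      rw [h1, ← h2]
      field_simp
    · simp [WTG.gpdf, hx]
  -- integrals with respect to P₁ and P₂
  have hint₁ : ∀ h : ℝ → ℝ, ∫ x, h x ∂P₁ = ∫ x, h x * WTG.gpdf k lam x := by
    intro h
    rw [hP₁, hp₁']
    exact WTG.integral_withDensity_ofReal _ (WTG.gpdf_measurable k lam)
      (WTG.gpdf_nonneg k lam hk hlam) h
  have hint₂ : ∀ h : ℝ → ℝ, ∫ x, h x ∂P₂ = ∫ x, h x * WTG.gpdf k (c * lam) x := by
    intro h
    rw [hP₂, hp₂']
    exact WTG.integral_withDensity_ofReal _ (WTG.gpdf_measurable k (c * lam))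
      (WTG.gpdf_nonneg k (c * lam) hk hclam) h
  -- substitution: integrals against gpdf (c*lam) equal integrals of h(c⬝) against gpdf lam
  have hsub : ∀ h : ℝ → ℝ,
      ∫ x, h x * WTG.gpdf k (c * lam) x = ∫ x, h (c * x) * WTG.gpdf k lam x := by
    intro h
    have key : ∀ x : ℝ, h (c * x) * WTG.gpdf k lam x
        = c * ((fun y => h y * WTG.gpdf k (c * lam) y) (c * x)) := by
      intro x
      by_cases hx : 0 < x
      · have hcx : 0 < c * x := by positivity
        simp only [WTG.gpdf, if_pos hx, if_pos hcx]
        have e1 : (c * x) ^ (k - 1) = c ^ (k - 1) * x ^ (k - 1) :=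
          Real.mul_rpow hcpos.le hx.le
        have e2 : ((c * lam) ^ k)⁻¹ = (c ^ k)⁻¹ * (lam ^ k)⁻¹ := by
          rw [Real.mul_rpow hcpos.le hlam.le, mul_inv]
        have e3 : c ^ k = c ^ (k - 1) * c := by
          rw [← Real.rpow_add_one hcpos.ne' (k - 1)]
          ring_nf
        have e4 : -(c * x) / (c * lam) = -x / lam := by
          field_simp
        have hck1 : (0:ℝ) < c ^ (k - 1) := Real.rpow_pos_of_pos hcpos _
        rw [e1, e2, e4, e3]
        field_simp
      · have hcx : ¬ 0 < c * x := by
          push_neg at hx ⊢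
          exact mul_nonpos_of_nonneg_of_nonpos hcpos.le hx
        simp [WTG.gpdf_zero_of_nonpos k lam hx, WTG.gpdf_zero_of_nonpos k (c * lam) hcx]
    calc ∫ x, h x * WTG.gpdf k (c * lam) x
        = c * (|c⁻¹| • ∫ y, h y * WTG.gpdf k (c * lam) y) := by
          rw [abs_of_pos (inv_pos.mpr hcpos), smul_eq_mul, ← mul_assoc,
            mul_inv_cancel₀ hcpos.ne', one_mul]
      _ = c * ∫ x, (fun y => h y * WTG.gpdf k (c * lam) y) (c * x) := by
          rw [MeasureTheory.Measure.integral_comp_mul_left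
            (fun y => h y * WTG.gpdf k (c * lam) y) c]
      _ = ∫ x, c * ((fun y => h y * WTG.gpdf k (c * lam) y) (c * x)) := by
          rw [MeasureTheory.integral_const_mul]
      _ = ∫ x, h (c * x) * WTG.gpdf k lam x := by
          congr 1
          funext x
          rw [← key x]
  -- the means
  have hmean₁ : ∫ x, (fun y => y) x ∂P₁ = lam * k := by
    rw [hint₁]
    simpa using WTG.gpdf_moment k lam hk hlam
  have hmean₂ : ∫ x, (fun y => y) x ∂P₂ = μ₂ := by
    rw [hint₂]
    have := WTG.gpdf_moment k (c * lam) hk hclam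
    rw [this, hc]
    field_simp
  have habs : |c - 1| * (lam * k) = |μ₂ - lam * k| := by
    have h1 : (0:ℝ) < lam * k := by positivity
    have h2 : |c - 1| * (lam * k) = |(c - 1) * (lam * k)| := by
      rw [abs_mul, abs_of_pos h1]
    rw [h2]
    congr 1
    rw [hc]
    field_simp
  refine le_antisymm ?_ ?_
  · -- W ≤ |μ₂ - lam k|
    apply hW.2
    rintro d ⟨h, hlip, rfl⟩
    have hcont : Continuous h := hlip.continuous
    have hb : ∀ x, |h x| ≤ |h 0| + 1 * |x| := by
      intro x
      have := hlip.dist_le_mul x 0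
      rw [Real.dist_eq, Real.dist_eq, NNReal.coe_one, one_mul, sub_zero] at this
      calc |h x| = |(h x - h 0) + h 0| := by ring_nf
        _ ≤ |h x - h 0| + |h 0| := abs_add_le _ _
        _ ≤ |x| + |h 0| := by linarith
        _ = |h 0| + 1 * |x| := by ring
    have hbc : ∀ x, |h (c * x)| ≤ |h 0| + c * |x| := by
      intro x
      calc |h (c * x)| ≤ |h 0| + 1 * |c * x| := hb (c * x)
        _ = |h 0| + c * |x| := by
            rw [one_mul, abs_mul, abs_of_pos hcpos]
    have i₁ : Integrable (fun x => h x * WTG.gpdf k lam x) :=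
      WTG.integrable_mul_gpdf k lam (|h 0|) 1 hk hlam h hcont hb
    have i₂ : Integrable (fun x => h (c * x) * WTG.gpdf k lam x) :=
      WTG.integrable_mul_gpdf k lam (|h 0|) c hk hlam (fun x => h (c * x))
        (hcont.comp (continuous_const.mul continuous_id)) hbc
    rw [hint₂, hint₁, hsub]
    rw [← MeasureTheory.integral_sub i₂ i₁]
    have hg : Integrable (fun x => |c - 1| * (x * WTG.gpdf k lam x)) :=
      (WTG.gpdf_moment_integrable k lam hk hlam).const_mul _
    have hle : ∀ x : ℝ, ‖h (c * x) * WTG.gpdf k lam x - h x * WTG.gpdf k lam x‖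
        ≤ |c - 1| * (x * WTG.gpdf k lam x) := by
      intro x
      have h0 := WTG.gpdf_nonneg k lam hk hlam x
      rw [show h (c * x) * WTG.gpdf k lam x - h x * WTG.gpdf k lam x
          = (h (c * x) - h x) * WTG.gpdf k lam x by ring]
      rw [Real.norm_eq_abs, abs_mul, abs_of_nonneg h0]
      rw [← WTG.abs_mul_gpdf k lam x, ← mul_assoc, ← abs_mul]
      refine mul_le_mul_of_nonneg_right ?_ h0
      have := hlip.dist_le_mul (c * x) x
      rw [Real.dist_eq, Real.dist_eq, NNReal.coe_one, one_mul] at this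
      calc |h (c * x) - h x| ≤ |c * x - x| := this
        _ = |(c - 1) * x| := by ring_nf
    calc |∫ x, (h (c * x) * WTG.gpdf k lam x - h x * WTG.gpdf k lam x)|
        ≤ ∫ x, |c - 1| * (x * WTG.gpdf k lam x) := by
          have := MeasureTheory.norm_integral_le_of_norm_le hg (ae_of_all _ hle)
          rwa [Real.norm_eq_abs] at this
      _ = |c - 1| * (lam * k) := by
          rw [MeasureTheory.integral_const_mul, WTG.gpdf_moment k lam hk hlam]
      _ = |μ₂ - lam * k| := habs
  · -- |μ₂ - lam k| ≤ W
    apply hW.1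
    refine ⟨fun y => y, ?_, ?_⟩
    · exact LipschitzWith.id
    · rw [hmean₁, hmean₂]
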